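/- There exists a 13-vertex planar graph with no Theta graph on 6 vertices as a subgraph having 27 edges; in particular, 27 > (18/7)·13 - 48/7, so the bound ex_P(n,Θ₆) ≤ (18/7)n - 48/7 fails at n = 13. -/

import Mathlib

open SimpleGraph

/-- `H` is a minor of `G`: there is an assignment of disjoint connected branch sets
of `G` to the vertices of `H` realizing all edges of `H`. -/
def HasMinor {V : Type*} {W : Type*} (G : SimpleGraph V) (H : SimpleGraph W) : Prop :=
  ∃ f : V → Option W,
    (∀ w : W, ∃ v, f v = some w) ∧
    (∀ w : W, (G.induce {v | f v = some w}).Preconnected) ∧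
    (∀ w₁ w₂ : W, H.Adj w₁ w₂ →
      ∃ v₁ v₂, f v₁ = some w₁ ∧ f v₂ = some w₂ ∧ G.Adj v₁ v₂)

/-- Planarity, via Wagner's theorem: no `K₅` minor and no `K₃,₃` minor. -/
def IsPlanar {V : Type*} (G : SimpleGraph V) : Prop :=
  ¬ HasMinor G (completeGraph (Fin 5)) ∧
    ¬ HasMinor G (completeBipartiteGraph (Fin 3) (Fin 3))

/-- `G` contains a Theta graph on 6 vertices: a 6-cycle together with a chord
joining two non-consecutive vertices of the cycle. -/
def HasTheta6 {V : Type*} (G : SimpleGraph V) : Prop :=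
  ∃ v : Fin 6 → V, Function.Injective v ∧
    (∀ i : Fin 6, G.Adj (v i) (v (i + 1))) ∧
    ∃ i j : Fin 6, i ≠ j ∧ j ≠ i + 1 ∧ i ≠ j + 1 ∧ G.Adj (v i) (v j)


section Aux

variable {V : Type*} {W : Type*}

def WalkIn (G : SimpleGraph V) (S : Set V) (x y : V) : Prop :=
  ∃ p : G.Walk x y, ∀ v ∈ p.support, v ∈ S

lemma WalkIn.mono {G : SimpleGraph V} {S T : Set V} (h : S ⊆ T) {x y : V}
    (hw : WalkIn G S x y) : WalkIn G T x y := by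
  obtain ⟨p, hp⟩ := hw
  exact ⟨p, fun v hv => h (hp v hv)⟩

def IsMinorMap (G : SimpleGraph V) (H : SimpleGraph W) (f : V → Option W) : Prop :=
  (∀ w : W, ∃ v, f v = some w) ∧
  (∀ w : W, (G.induce {v | f v = some w}).Preconnected) ∧
  (∀ w₁ w₂ : W, H.Adj w₁ w₂ →
    ∃ v₁ v₂, f v₁ = some w₁ ∧ f v₂ = some w₂ ∧ G.Adj v₁ v₂)

/-- Crossing lemma: a walk avoiding `c` that starts in `A` stays in `A`. -/
lemma walk_side {G : SimpleGraph V} {A B : Set V} {c : V}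
    (hAB : ∀ v, v ∈ A ∨ v ∈ B)
    (hsep : ∀ a b, G.Adj a b → a ∈ A → b ∈ B → a = c ∨ b = c)
    {S : Set V} (hS : ∀ v ∈ S, v ≠ c) :
    ∀ {x y : V}, WalkIn G S x y → x ∈ A → y ∈ A := by
  rintro x y ⟨p, hp⟩ hx
  induction p with
  | nil => exact hx
  | @cons a b c' h p ih =>
      have ha : a ∈ S := hp a (by simp)
      have hb : b ∈ S := hp b (by simp)
      have hbA : b ∈ A := by
        rcases hAB b with h' | h'
        · exact h'
        · rcases hsep a b h hx h' with rfl | rfl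
          · exact absurd rfl (hS a ha)
          · exact absurd rfl (hS b hb)
      exact ih (fun v hv => hp v (by rw [Walk.support_cons]; exact List.mem_cons_of_mem _ hv))
        hbA

/-- Restriction lemma: a walk inside `S` ending in `A` can be replaced by a walk inside
`S ∩ A`, starting from `x` (if `x ∈ A`) or from `c` (if not). -/
lemma walkIn_restrict {G : SimpleGraph V} {A B : Set V} {c : V} (hcA : c ∈ A)
    (hAB : ∀ v, v ∈ A ∨ v ∈ B)
    (hsep : ∀ a b, G.Adj a b → a ∈ A → b ∈ B → a = c ∨ b = c)
    {S : Set V} :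
    ∀ {x y : V}, WalkIn G S x y → y ∈ A →
      (x ∈ A → WalkIn G (S ∩ A) x y) ∧ (x ∉ A → c ∈ S ∧ WalkIn G (S ∩ A) c y) := by
  rintro x y ⟨p, hp⟩ hy
  induction p with
  | nil =>
      refine ⟨fun hx => ⟨Walk.nil, by simpa using ⟨hp _ (by simp), hy⟩⟩, fun hx => absurd hy hx⟩
  | @cons a b c' h p ih =>
      have ha : a ∈ S := hp a (by simp)
      have hb : b ∈ S := hp b (by simp)
      have hpb : ∀ v ∈ p.support, v ∈ S := fun v hv =>
        hp v (by rw [Walk.support_cons]; exact List.mem_cons_of_mem _ hv)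
      have IH := ih hpb hy
      by_cases hbA : b ∈ A
      · have IHA := IH.1 hbA
        constructor
        · intro haA
          obtain ⟨q, hq⟩ := IHA
          refine ⟨Walk.cons h q, ?_⟩
          intro v hv
          rw [Walk.support_cons] at hv
          rcases List.mem_cons.mp hv with rfl | hv
          · exact ⟨ha, haA⟩
          · exact hq v hv
        · intro haA
          -- a ∉ A, b ∈ A, edge a b : then b = c
          have haB : a ∈ B := (hAB a).resolve_left haA
          have hac : a ≠ c := fun h' => haA (h' ▸ hcA)
          have : b = c ∨ a = c := hsep b a h.symm hbA haB
          have hbc : b = c := this.resolve_right hac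
          exact ⟨hbc ▸ hb, hbc ▸ IHA⟩
      · have IHB := IH.2 hbA
        constructor
        · intro haA
          -- a ∈ A, b ∉ A : a = c
          have hbB : b ∈ B := (hAB b).resolve_left hbA
          have hbc : b ≠ c := fun h' => hbA (h' ▸ hcA)
          have hac : a = c := (hsep a b h haA hbB).resolve_right hbc
          exact hac ▸ IHB.2
        · intro _
          exact IHB

lemma walkIn_of_induce_walk {G : SimpleGraph V} {S : Set V} :
    ∀ {x y : ↥S}, (G.induce S).Walk x y → WalkIn G S (↑x) (↑y) := by
  intro x y p
  induction p with
  | nil => exact ⟨Walk.nil, by simp⟩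
  | @cons a b c h p ih =>
      obtain ⟨q, hq⟩ := ih
      have hab : G.Adj ↑a ↑b := h
      refine ⟨Walk.cons hab q, ?_⟩
      intro v hv
      rw [Walk.support_cons] at hv
      rcases List.mem_cons.mp hv with hv | hv
      · exact hv ▸ a.2
      · exact hq v hv

lemma walkIn_of_reachable {G : SimpleGraph V} {S : Set V} {x y : ↥S}
    (h : (G.induce S).Reachable x y) : WalkIn G S (↑x) (↑y) := by
  obtain ⟨p⟩ := h
  exact walkIn_of_induce_walk p

lemma reachable_induce_of_walkIn {G : SimpleGraph V} {S : Set V} {x y : V}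
    (h : WalkIn G S x y) (hx : x ∈ S) (hy : y ∈ S) :
    (G.induce S).Reachable ⟨x, hx⟩ ⟨y, hy⟩ := by
  obtain ⟨p, hp⟩ := h
  induction p with
  | nil => rfl
  | @cons a b c h p ih =>
      have hb : b ∈ S := hp b (by simp)
      have step : (G.induce S).Adj ⟨a, hx⟩ ⟨b, hb⟩ := h
      exact (step.reachable).trans (ih hb hy (fun v hv => hp v (by
        rw [Walk.support_cons]; exact List.mem_cons_of_mem _ hv)))

section Split

variable {G : SimpleGraph V} {H : SimpleGraph W} {A B : Set V} {c : V} {S : Set V}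
  {f : V → Option W}

/-- Core construction: if every branch set whose class is not that of `c` lies in `A`,
then there is a minor map with support inside `S ∩ A`. -/
lemma minor_construct (hcA : c ∈ A)
    (hAB : ∀ v, v ∈ A ∨ v ∈ B)
    (hsep : ∀ a b, G.Adj a b → a ∈ A → b ∈ B → a = c ∨ b = c)
    (hf : IsMinorMap G H f)
    (hsupp : ∀ v, f v ≠ none → v ∈ S)
    (hside : ∀ w v, f v = some w → f c ≠ some w → v ∈ A) :
    ∃ f' : V → Option W, IsMinorMap G H f' ∧ ∀ v, f' v ≠ none → v ∈ S ∩ A := by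
  classical
  obtain ⟨hsurj, hconn, hedge⟩ := hf
  refine ⟨fun v => if v ∈ A then f v else none, ⟨?_, ?_, ?_⟩, ?_⟩
  case _ => -- surjectivity
    intro w
    by_cases hc : f c = some w
    · exact ⟨c, by simp [hcA, hc]⟩
    · obtain ⟨v, hv⟩ := hsurj w
      exact ⟨v, by simp [hside w v hv hc, hv]⟩
  case _ => -- connectivity
    intro w
    intro x y
    have hx : ↑x ∈ A ∧ f ↑x = some w := by
      have := x.2
      by_cases h : (x : V) ∈ A
      · exact ⟨h, by simpa [h] using this⟩
      · simp only [Set.mem_setOf_eq, if_neg h] at this; exact absurd this (by simp)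
    have hy : ↑y ∈ A ∧ f ↑y = some w := by
      have := y.2
      by_cases h : (y : V) ∈ A
      · exact ⟨h, by simpa [h] using this⟩
      · simp only [Set.mem_setOf_eq, if_neg h] at this; exact absurd this (by simp)
    have hw : WalkIn G {v | f v = some w} ↑x ↑y :=
      walkIn_of_reachable (hconn w ⟨↑x, hx.2⟩ ⟨↑y, hy.2⟩)
    have hw2 : WalkIn G ({v | f v = some w} ∩ A) ↑x ↑y :=
      (walkIn_restrict hcA hAB hsep hw hy.1).1 hx.1
    have hw3 : WalkIn G {v | (if v ∈ A then f v else none) = some w} ↑x ↑y := by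
      refine hw2.mono ?_
      rintro v ⟨hv1, hv2⟩
      simp only [Set.mem_setOf_eq, if_pos hv2]
      exact hv1
    exact reachable_induce_of_walkIn hw3 x.2 y.2
  case _ => -- edges
    intro w1 w2 hadj
    obtain ⟨v1, v2, hv1, hv2, hGadj⟩ := hedge w1 w2 hadj
    have pull : ∀ {va vb : V}, G.Adj va vb → vb ∈ A → vb ≠ c → va ∈ A := by
      intro va vb h hbA hbc
      by_cases haA : va ∈ A
      · exact haA
      · have haB : va ∈ B := (hAB va).resolve_left haA
        have : vb = c ∨ va = c := hsep vb va h.symm hbA haB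
        rcases this with h' | h'
        · exact absurd h' hbc
        · exact h' ▸ hcA
    have hne : w1 ≠ w2 := hadj.ne
    have key : v1 ∈ A ∧ v2 ∈ A := by
      by_cases h1 : f c = some w1
      · have h2 : f c ≠ some w2 := by
          intro h2; exact hne (by rw [h1] at h2; exact Option.some_injective _ h2)
        have hv2A : v2 ∈ A := hside w2 v2 hv2 h2
        have hv2c : v2 ≠ c := fun h' => h2 (h' ▸ hv2)
        exact ⟨pull hGadj hv2A hv2c, hv2A⟩
      · have hv1A : v1 ∈ A := hside w1 v1 hv1 h1
        have hv1c : v1 ≠ c := fun h' => h1 (h' ▸ hv1)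
        exact ⟨hv1A, pull hGadj.symm hv1A hv1c⟩
    exact ⟨v1, v2, by simp [key.1, hv1], by simp [key.2, hv2], hGadj⟩
  case _ => -- support
    intro v hv
    by_cases h : v ∈ A
    · simp only [if_pos h] at hv
      exact ⟨hsupp v hv, h⟩
    · simp [if_neg h] at hv

/-- Directional split lemma. -/
lemma split_dir (hcA : c ∈ A)
    (hAB : ∀ v, v ∈ A ∨ v ∈ B)
    (hsep : ∀ a b, G.Adj a b → a ∈ A → b ∈ B → a = c ∨ b = c)
    (hconnH : ∀ w1 w2 : W, Relation.ReflTransGen H.Adj w1 w2)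
    (h2conn : ∀ w0 w1 w2 : W, w1 ≠ w0 → w2 ≠ w0 →
      Relation.ReflTransGen (fun a b => H.Adj a b ∧ a ≠ w0 ∧ b ≠ w0) w1 w2)
    (hf : IsMinorMap G H f)
    (hsupp : ∀ v, f v ≠ none → v ∈ S)
    {w1 : W} {v0 : V} (hv0 : f v0 = some w1) (hv0A : v0 ∈ A) (hnew1 : f c ≠ some w1) :
    ∃ f' : V → Option W, IsMinorMap G H f' ∧ ∀ v, f' v ≠ none → v ∈ S ∩ A := by
  classical
  have pull : ∀ {va vb : V}, G.Adj va vb → vb ∈ A → vb ≠ c → va ∈ A := by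
    intro va vb h hbA hbc
    by_cases haA : va ∈ A
    · exact haA
    · have haB : va ∈ B := (hAB va).resolve_left haA
      rcases hsep vb va h.symm hbA haB with h' | h'
      · exact absurd h' hbc
      · exact h' ▸ hcA
  -- if one vertex of a branch set avoiding c is in A, the whole branch set is
  have branchA : ∀ w (u : V), f u = some w → u ∈ A → f c ≠ some w →
      ∀ v, f v = some w → v ∈ A := by
    intro w u hu huA hnc v hv
    have havoid : ∀ x ∈ {v | f v = some w}, x ≠ c := by
      intro x hx hxc
      exact hnc (hxc ▸ hx)
    have hw : WalkIn G {v | f v = some w} u v :=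
      walkIn_of_reachable (hf.2.1 w ⟨u, hu⟩ ⟨v, hv⟩)
    exact walk_side hAB hsep havoid hw huA
  -- propagate along H-edges between classes avoiding c
  have prop : ∀ {wa wb : W}, H.Adj wa wb → f c ≠ some wa → f c ≠ some wb →
      (∀ v, f v = some wa → v ∈ A) → ∀ v, f v = some wb → v ∈ A := by
    intro wa wb hadj hna hnb ha
    obtain ⟨va, vb, hva, hvb, hG⟩ := hf.2.2 wa wb hadj
    have hvaA : va ∈ A := ha va hva
    have hvac : va ≠ c := fun h => hna (h ▸ hva)
    have hvbA : vb ∈ A := pull hG.symm hvaA hvac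
    exact branchA wb vb hvb hvbA hnb
  refine minor_construct hcA hAB hsep hf hsupp ?_
  rcases hfc : f c with _ | w0
  · -- f c = none : propagate along plain connectivity from w1
    have hnone : ∀ w : W, f c ≠ some w := fun w h => by simp [hfc] at h
    have allA : ∀ w : W, Relation.ReflTransGen H.Adj w1 w →
        ∀ v, f v = some w → v ∈ A := by
      intro w chain
      induction chain with
      | refl => exact branchA w1 v0 hv0 hv0A (hnone w1)
      | @tail b cw hr hstep ih => exact prop hstep (hnone b) (hnone cw) ih
    exact fun w v hv _ => allA w (hconnH w1 w) v hv
  · -- f c = some w0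
    have hnc : ∀ w : W, w ≠ w0 → f c ≠ some w := by
      intro w hw h
      rw [hfc] at h
      exact hw (Option.some_injective _ h).symm
    have hw1w0 : w1 ≠ w0 := by
      intro h
      exact hnew1 (h ▸ hfc)
    have allA : ∀ w : W,
        Relation.ReflTransGen (fun a b => H.Adj a b ∧ a ≠ w0 ∧ b ≠ w0) w1 w →
        ∀ v, f v = some w → v ∈ A := by
      intro w chain
      induction chain with
      | refl => exact branchA w1 v0 hv0 hv0A hnew1
      | @tail b cw hr hstep ih =>
          exact prop hstep.1 (hnc b hstep.2.1) (hnc cw hstep.2.2) ih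
    intro w v hv hnw
    have hww0 : w ≠ w0 := by
      intro h
      exact hnw (by rw [h])
    exact allA w (h2conn w0 w1 w hw1w0 hww0) v hv

/-- Splitting a minor along a cut vertex. -/
lemma minor_split (hcA : c ∈ A) (hcB : c ∈ B)
    (hAB : ∀ v, v ∈ A ∨ v ∈ B)
    (hsep : ∀ a b, G.Adj a b → a ∈ A → b ∈ B → a = c ∨ b = c)
    [Nonempty W]
    (hW2 : ∀ w0 : W, ∃ w, w ≠ w0)
    (hconnH : ∀ w1 w2 : W, Relation.ReflTransGen H.Adj w1 w2)
    (h2conn : ∀ w0 w1 w2 : W, w1 ≠ w0 → w2 ≠ w0 →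
      Relation.ReflTransGen (fun a b => H.Adj a b ∧ a ≠ w0 ∧ b ≠ w0) w1 w2)
    (hf : IsMinorMap G H f)
    (hsupp : ∀ v, f v ≠ none → v ∈ S) :
    (∃ f' : V → Option W, IsMinorMap G H f' ∧ ∀ v, f' v ≠ none → v ∈ S ∩ A) ∨
    (∃ f' : V → Option W, IsMinorMap G H f' ∧ ∀ v, f' v ≠ none → v ∈ S ∩ B) := by
  classical
  have hBA : ∀ v, v ∈ B ∨ v ∈ A := fun v => (hAB v).symm
  have hsep' : ∀ a b, G.Adj a b → a ∈ B → b ∈ A → a = c ∨ b = c :=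
    fun a b h ha hb => (hsep b a h.symm hb ha).symm
  -- find a starting class w1 with f c ≠ some w1 and a vertex v0 in its branch set
  have : ∃ (w1 : W) (v0 : V), f v0 = some w1 ∧ f c ≠ some w1 := by
    rcases hfc : f c with _ | w0
    · obtain ⟨w1⟩ := ‹Nonempty W›
      obtain ⟨v0, hv0⟩ := hf.1 w1
      exact ⟨w1, v0, hv0, by simp⟩
    · obtain ⟨w1, hw1⟩ := hW2 w0
      obtain ⟨v0, hv0⟩ := hf.1 w1
      refine ⟨w1, v0, hv0, ?_⟩
      intro h
      exact hw1 (Option.some_injective _ h).symm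
  obtain ⟨w1, v0, hv0, hnew1⟩ := this
  rcases hAB v0 with h0 | h0
  · exact Or.inl (split_dir hcA hAB hsep hconnH h2conn hf hsupp hv0 h0 hnew1)
  · exact Or.inr (split_dir hcB hBA hsep' hconnH h2conn hf hsupp hv0 h0 hnew1)

end Split

section Kill

variable {G : SimpleGraph V} [DecidableEq V]

lemma no_K5_of_small (S : Finset V) (hS : S.card = 5)
    {x y : V} (hx : x ∈ S) (hy : y ∈ S) (hxy : x ≠ y) (hnadj : ¬ G.Adj x y)
    {f : V → Option (Fin 5)} (hf : IsMinorMap G (completeGraph (Fin 5)) f)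
    (hsupp : ∀ v, f v ≠ none → v ∈ S) : False := by
  classical
  choose g hg using hf.1
  have hginj : Function.Injective g := by
    intro a b hab
    have : some a = some b := by rw [← hg a, ← hg b, hab]
    exact Option.some_injective _ this
  have himg : Finset.image g Finset.univ ⊆ S := by
    intro v hv
    obtain ⟨w, _, rfl⟩ := Finset.mem_image.mp hv
    exact hsupp (g w) (by rw [hg w]; simp)
  have hcard : (Finset.image g Finset.univ).card = 5 := by
    rw [Finset.card_image_of_injective _ hginj]
    simp
  have heq : Finset.image g Finset.univ = S :=
    Finset.eq_of_subset_of_card_le himg (by rw [hcard, hS])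
  have hxg : ∃ w1, g w1 = x := by
    have : x ∈ Finset.image g Finset.univ := heq ▸ hx
    obtain ⟨w1, _, h⟩ := Finset.mem_image.mp this
    exact ⟨w1, h⟩
  have hyg : ∃ w2, g w2 = y := by
    have : y ∈ Finset.image g Finset.univ := heq ▸ hy
    obtain ⟨w2, _, h⟩ := Finset.mem_image.mp this
    exact ⟨w2, h⟩
  obtain ⟨w1, rfl⟩ := hxg
  obtain ⟨w2, rfl⟩ := hyg
  have hw12 : w1 ≠ w2 := fun h => hxy (by rw [h])
  obtain ⟨v1, v2, hv1, hv2, hGadj⟩ := hf.2.2 w1 w2 (by simpa using hw12)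
  -- v1 is in the branch set of w1, which must be {g w1}
  have hv1' : v1 = g w1 := by
    have hv1S : v1 ∈ S := hsupp v1 (by rw [hv1]; simp)
    have : v1 ∈ Finset.image g Finset.univ := heq ▸ hv1S
    obtain ⟨w, _, hw⟩ := Finset.mem_image.mp this
    have : some w = some w1 := by rw [← hg w, hw, hv1]
    rw [← hw, Option.some_injective _ this]
  have hv2' : v2 = g w2 := by
    have hv2S : v2 ∈ S := hsupp v2 (by rw [hv2]; simp)
    have : v2 ∈ Finset.image g Finset.univ := heq ▸ hv2S
    obtain ⟨w, _, hw⟩ := Finset.mem_image.mp this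
    have : some w = some w2 := by rw [← hg w, hw, hv2]
    rw [← hw, Option.some_injective _ this]
  exact hnadj (hv1' ▸ hv2' ▸ hGadj)

lemma no_K33_of_small (S : Finset V) (hS : S.card ≤ 5)
    {f : V → Option (Fin 3 ⊕ Fin 3)}
    (hf : IsMinorMap G (completeBipartiteGraph (Fin 3) (Fin 3)) f)
    (hsupp : ∀ v, f v ≠ none → v ∈ S) : False := by
  classical
  choose g hg using hf.1
  have hginj : Function.Injective g := by
    intro a b hab
    have : some a = some b := by rw [← hg a, ← hg b, hab]
    exact Option.some_injective _ this
  have : (6 : ℕ) ≤ S.card := by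
    calc (6 : ℕ) = (Finset.univ : Finset (Fin 3 ⊕ Fin 3)).card := by simp
    _ ≤ S.card := Finset.card_le_card_of_injOn g
        (fun w _ => hsupp (g w) (by rw [hg w]; simp)) (hginj.injOn)
  omega

end Kill

section Hfacts

lemma K5_hW2 : ∀ w0 : Fin 5, ∃ w, w ≠ w0 := by decide

lemma K5_conn : ∀ w1 w2 : Fin 5,
    Relation.ReflTransGen (completeGraph (Fin 5)).Adj w1 w2 := by
  intro w1 w2
  rcases eq_or_ne w1 w2 with rfl | h
  · rfl
  · exact Relation.ReflTransGen.single h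

lemma K5_2conn : ∀ w0 w1 w2 : Fin 5, w1 ≠ w0 → w2 ≠ w0 →
    Relation.ReflTransGen
      (fun a b => (completeGraph (Fin 5)).Adj a b ∧ a ≠ w0 ∧ b ≠ w0) w1 w2 := by
  intro w0 w1 w2 h1 h2
  rcases eq_or_ne w1 w2 with rfl | h
  · rfl
  · exact Relation.ReflTransGen.single ⟨h, h1, h2⟩

lemma K33_adj : ∀ a b : Fin 3, (completeBipartiteGraph (Fin 3) (Fin 3)).Adj
    (Sum.inl a) (Sum.inr b) := by
  intro a b
  simp [completeBipartiteGraph]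

lemma K33_hW2 : ∀ w0 : Fin 3 ⊕ Fin 3, ∃ w, w ≠ w0 := by decide

lemma K33_conn : ∀ w1 w2 : Fin 3 ⊕ Fin 3,
    Relation.ReflTransGen (completeBipartiteGraph (Fin 3) (Fin 3)).Adj w1 w2 := by
  intro w1 w2
  rcases eq_or_ne w1 w2 with rfl | h
  · rfl
  · match w1, w2 with
    | Sum.inl a, Sum.inr b => exact Relation.ReflTransGen.single (K33_adj a b)
    | Sum.inr a, Sum.inl b => exact Relation.ReflTransGen.single ((K33_adj b a).symm)
    | Sum.inl a, Sum.inl b =>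
        exact Relation.ReflTransGen.trans
          (Relation.ReflTransGen.single (K33_adj a 0))
          (Relation.ReflTransGen.single ((K33_adj b 0).symm))
    | Sum.inr a, Sum.inr b =>
        exact Relation.ReflTransGen.trans
          (Relation.ReflTransGen.single ((K33_adj 0 a).symm))
          (Relation.ReflTransGen.single (K33_adj 0 b))

lemma K33_2conn : ∀ w0 w1 w2 : Fin 3 ⊕ Fin 3, w1 ≠ w0 → w2 ≠ w0 →
    Relation.ReflTransGen
      (fun a b => (completeBipartiteGraph (Fin 3) (Fin 3)).Adj a b ∧ a ≠ w0 ∧ b ≠ w0)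
      w1 w2 := by
  intro w0 w1 w2 h1 h2
  rcases eq_or_ne w1 w2 with rfl | h
  · rfl
  · match w1, w2 with
    | Sum.inl a, Sum.inr b => exact Relation.ReflTransGen.single ⟨K33_adj a b, h1, h2⟩
    | Sum.inr a, Sum.inl b => exact Relation.ReflTransGen.single ⟨(K33_adj b a).symm, h1, h2⟩
    | Sum.inl a, Sum.inl b =>
        obtain ⟨m, hm⟩ : ∃ m : Fin 3, Sum.inr m ≠ w0 := by
          match w0 with
          | Sum.inl _ => exact ⟨0, by simp⟩
          | Sum.inr x =>
              rcases eq_or_ne x 0 with rfl | hx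
              · exact ⟨1, by simp⟩
              · exact ⟨0, by simpa using fun h => hx h.symm⟩
        exact Relation.ReflTransGen.trans
          (Relation.ReflTransGen.single ⟨K33_adj a m, h1, hm⟩)
          (Relation.ReflTransGen.single ⟨(K33_adj b m).symm, hm, h2⟩)
    | Sum.inr a, Sum.inr b =>
        obtain ⟨m, hm⟩ : ∃ m : Fin 3, Sum.inl m ≠ w0 := by
          match w0 with
          | Sum.inr _ => exact ⟨0, by simp⟩
          | Sum.inl x =>
              rcases eq_or_ne x 0 with rfl | hx
              · exact ⟨1, by simp⟩
              · exact ⟨0, by simpa using fun h => hx h.symm⟩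
        exact Relation.ReflTransGen.trans
          (Relation.ReflTransGen.single ⟨(K33_adj m a).symm, h1, hm⟩)
          (Relation.ReflTransGen.single ⟨K33_adj m b, hm, h2⟩)

end Hfacts

section Cycle

lemma fin6_cases : ∀ i0 j : Fin 6,
    j = i0 ∨ j = i0 + 1 ∨ j = i0 + 2 ∨ j = i0 + 3 ∨ j = i0 + 4 ∨ j = i0 + 5 := by decide

lemma fin6_ne : ∀ i0 : Fin 6, i0 + 1 ≠ i0 ∧ i0 + 2 ≠ i0 ∧ i0 + 3 ≠ i0 ∧
    i0 + 4 ≠ i0 ∧ i0 + 5 ≠ i0 := by decide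

lemma cycle_confine {G : SimpleGraph V} (v : Fin 6 → V) (hinj : Function.Injective v)
    (hadj : ∀ i : Fin 6, G.Adj (v i) (v (i + 1)))
    (A B : Set V) (c : V)
    (hreg : ∀ j, v j ∈ A ∨ v j = c ∨ v j ∈ B)
    (hAB : ∀ a b, G.Adj a b → a ∈ A → b ∈ B → False)
    (hBA : ∀ a b, G.Adj a b → a ∈ B → b ∈ A → False) :
    (∀ j, v j ∈ A ∨ v j = c) ∨ (∀ j, v j ∈ B ∨ v j = c) := by
  have stepA : ∀ i : Fin 6, v (i + 1) ≠ c → v i ∈ A → v (i + 1) ∈ A := by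
    intro i hne hA
    rcases hreg (i + 1) with h | h | h
    · exact h
    · exact absurd h hne
    · exact absurd (hAB _ _ (hadj i) hA h) not_false
  have stepB : ∀ i : Fin 6, v (i + 1) ≠ c → v i ∈ B → v (i + 1) ∈ B := by
    intro i hne hB
    rcases hreg (i + 1) with h | h | h
    · exact absurd (hBA _ _ (hadj i) hB h) not_false
    · exact absurd h hne
    · exact h
  by_cases hc : ∃ i0, v i0 = c
  · obtain ⟨i0, hi0⟩ := hc
    have hnec : ∀ j, j ≠ i0 → v j ≠ c := by
      intro j hj h
      exact hj (hinj (h.trans hi0.symm))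
    obtain ⟨n1, n2, n3, n4, n5⟩ := fin6_ne i0
    -- the five vertices i0+1 .. i0+5
    have key : (∀ t : Fin 6, t ≠ i0 → v t ∈ A) ∨ (∀ t : Fin 6, t ≠ i0 → v t ∈ B) := by
      have h1 := hnec _ n1
      have h2 := hnec _ n2
      have h3 := hnec _ n3
      have h4 := hnec _ n4
      have h5 := hnec _ n5
      have e2 : i0 + 1 + 1 = i0 + 2 := by rw [add_assoc]; rfl
      have e3 : i0 + 2 + 1 = i0 + 3 := by rw [add_assoc]; rfl
      have e4 : i0 + 3 + 1 = i0 + 4 := by rw [add_assoc]; rfl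
      have e5 : i0 + 4 + 1 = i0 + 5 := by rw [add_assoc]; rfl
      have conc : ∀ (P : Set V), (∀ i : Fin 6, v (i + 1) ≠ c → v i ∈ P → v (i + 1) ∈ P)
          → v (i0 + 1) ∈ P → (∀ t : Fin 6, t ≠ i0 → v t ∈ P) := by
        intro P step hp1 t ht
        have hp2 : v (i0 + 2) ∈ P := e2 ▸ step (i0 + 1) (e2 ▸ h2) hp1
        have hp3 : v (i0 + 3) ∈ P := e3 ▸ step (i0 + 2) (e3 ▸ h3) hp2
        have hp4 : v (i0 + 4) ∈ P := e4 ▸ step (i0 + 3) (e4 ▸ h4) hp3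
        have hp5 : v (i0 + 5) ∈ P := e5 ▸ step (i0 + 4) (e5 ▸ h5) hp4
        rcases fin6_cases i0 t with rfl | rfl | rfl | rfl | rfl | rfl
        · exact absurd rfl ht
        all_goals assumption
      rcases hreg (i0 + 1) with h | h | h
      · exact Or.inl (conc A stepA h)
      · exact absurd h h1
      · exact Or.inr (conc B stepB h)
    rcases key with key | key
    · refine Or.inl fun j => ?_
      by_cases hj : j = i0
      · exact Or.inr (hj ▸ hi0)
      · exact Or.inl (key j hj)
    · refine Or.inr fun j => ?_
      by_cases hj : j = i0
      · exact Or.inr (hj ▸ hi0)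
      · exact Or.inl (key j hj)
  · push_neg at hc
    have conc : ∀ (P : Set V), (∀ i : Fin 6, v (i + 1) ≠ c → v i ∈ P → v (i + 1) ∈ P)
        → v 0 ∈ P → (∀ t : Fin 6, v t ∈ P) := by
      intro P step hp0 t
      have hp1 : v 1 ∈ P := step 0 (hc _) hp0
      have hp2 : v 2 ∈ P := step 1 (hc _) hp1
      have hp3 : v 3 ∈ P := step 2 (hc _) hp2
      have hp4 : v 4 ∈ P := step 3 (hc _) hp3
      have hp5 : v 5 ∈ P := step 4 (hc _) hp4
      rcases fin6_cases 0 t with rfl | rfl | rfl | rfl | rfl | rfl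
      all_goals simpa using by assumption
    rcases hreg 0 with h | h | h
    · exact Or.inl fun j => Or.inl (conc A stepA h j)
    · exact absurd h (hc 0)
    · exact Or.inr fun j => Or.inl (conc B stepB h j)

end Cycle

section Concrete

def myAdj (a b : Fin 13) : Prop := a ≠ b ∧
  ((a.val ≤ 4 ∧ b.val ≤ 4) ∨ (4 ≤ a.val ∧ a.val ≤ 8 ∧ 4 ≤ b.val ∧ b.val ≤ 8) ∨
    (8 ≤ a.val ∧ 8 ≤ b.val)) ∧
  ¬(a.val = 0 ∧ b.val = 1) ∧ ¬(a.val = 1 ∧ b.val = 0) ∧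
  ¬(a.val = 5 ∧ b.val = 6) ∧ ¬(a.val = 6 ∧ b.val = 5) ∧
  ¬(a.val = 9 ∧ b.val = 10) ∧ ¬(a.val = 10 ∧ b.val = 9)

instance myAdj.decRel : DecidableRel myAdj := fun a b => by
  unfold myAdj; infer_instance

def myG : SimpleGraph (Fin 13) where
  Adj := myAdj
  symm := ⟨fun a b h => (by decide : ∀ a b, myAdj a b → myAdj b a) a b h⟩
  loopless := ⟨fun a h => (by decide : ∀ a, ¬ myAdj a a) a h⟩

instance : DecidableRel myG.Adj := myAdj.decRel

lemma myG_edges : myG.edgeSet.ncard = 27 := by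
  rw [Set.ncard_eq_toFinset_card']
  decide

lemma pigeon6 (v : Fin 6 → Fin 13) (hinj : Function.Injective v)
    (S : Finset (Fin 13)) (hS : S.card ≤ 5) (hmem : ∀ j, v j ∈ S) : False := by
  have h6 : (Finset.univ : Finset (Fin 6)).card ≤ S.card :=
    Finset.card_le_card_of_injOn v (fun a _ => hmem a) hinj.injOn
  simp only [Finset.card_univ, Fintype.card_fin] at h6
  omega

lemma myG_no_theta : ¬ HasTheta6 myG := by
  rintro ⟨v, hinj, hadj, -⟩
  have round1 := cycle_confine v hinj hadj {x | x.val ≤ 3} {x | 5 ≤ x.val} 4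
    (by
      intro j
      by_cases h : (v j).val ≤ 3
      · exact Or.inl h
      · by_cases h4 : (v j).val = 4
        · exact Or.inr (Or.inl (Fin.ext (by simpa using h4)))
        · exact Or.inr (Or.inr (by simp only [Set.mem_setOf_eq]; omega)))
    (fun a b h ha hb =>
      (by decide : ∀ a b : Fin 13, myG.Adj a b → a.val ≤ 3 → 5 ≤ b.val → False) a b h ha hb)
    (fun a b h ha hb =>
      (by decide : ∀ a b : Fin 13, myG.Adj a b → 5 ≤ a.val → b.val ≤ 3 → False) a b h ha hb)
  rcases round1 with hall | hall
  · refine pigeon6 v hinj (Finset.univ.filter (fun x : Fin 13 => x.val ≤ 4)) (by decide) ?_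
    intro j
    rcases hall j with h | h
    · exact Finset.mem_filter.mpr ⟨Finset.mem_univ _, by
        simp only [Set.mem_setOf_eq] at h; omega⟩
    · exact Finset.mem_filter.mpr ⟨Finset.mem_univ _, by rw [h]; decide⟩
  · have round2 := cycle_confine v hinj hadj
      {x | 4 ≤ x.val ∧ x.val ≤ 7} {x | 9 ≤ x.val} 8
      (by
        intro j
        rcases hall j with h | h
        · simp only [Set.mem_setOf_eq] at h
          by_cases h7 : (v j).val ≤ 7
          · exact Or.inl ⟨by omega, h7⟩
          · by_cases h8 : (v j).val = 8
            · exact Or.inr (Or.inl (Fin.ext (by simpa using h8)))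
            · exact Or.inr (Or.inr (by simp only [Set.mem_setOf_eq]; omega))
        · exact Or.inl (by rw [h]; exact ⟨by decide, by decide⟩))
      (fun a b h ha hb =>
        (by decide : ∀ a b : Fin 13, myG.Adj a b →
          4 ≤ a.val ∧ a.val ≤ 7 → 9 ≤ b.val → False) a b h ha hb)
      (fun a b h ha hb =>
        (by decide : ∀ a b : Fin 13, myG.Adj a b →
          9 ≤ a.val → 4 ≤ b.val ∧ b.val ≤ 7 → False) a b h ha hb)
    rcases round2 with hall2 | hall2
    · refine pigeon6 v hinj
        (Finset.univ.filter (fun x : Fin 13 => 4 ≤ x.val ∧ x.val ≤ 8)) (by decide) ?_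
      intro j
      rcases hall2 j with h | h
      · exact Finset.mem_filter.mpr ⟨Finset.mem_univ _, by
          obtain ⟨h1, h2⟩ := h; exact ⟨h1, by omega⟩⟩
      · exact Finset.mem_filter.mpr ⟨Finset.mem_univ _, by rw [h]; exact ⟨by decide, by decide⟩⟩
    · refine pigeon6 v hinj
        (Finset.univ.filter (fun x : Fin 13 => 8 ≤ x.val)) (by decide) ?_
      intro j
      rcases hall2 j with h | h
      · exact Finset.mem_filter.mpr ⟨Finset.mem_univ _, by
          simp only [Set.mem_setOf_eq] at h; omega⟩
      · exact Finset.mem_filter.mpr ⟨Finset.mem_univ _, by rw [h]; decide⟩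

end Concrete

section Planar

lemma myG_sep1 : ∀ a b : Fin 13, myG.Adj a b → a ∈ {x : Fin 13 | x.val ≤ 4} →
    b ∈ {x : Fin 13 | 4 ≤ x.val} → a = 4 ∨ b = 4 :=
  fun a b h ha hb =>
    (by decide : ∀ a b : Fin 13, myG.Adj a b → a.val ≤ 4 → 4 ≤ b.val → a = 4 ∨ b = 4)
      a b h ha hb

lemma myG_sep2 : ∀ a b : Fin 13, myG.Adj a b → a ∈ {x : Fin 13 | x.val ≤ 8} →
    b ∈ {x : Fin 13 | 8 ≤ x.val} → a = 8 ∨ b = 8 :=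
  fun a b h ha hb =>
    (by decide : ∀ a b : Fin 13, myG.Adj a b → a.val ≤ 8 → 8 ≤ b.val → a = 8 ∨ b = 8)
      a b h ha hb

lemma myG_AB1 : ∀ v : Fin 13, v ∈ {x : Fin 13 | x.val ≤ 4} ∨ v ∈ {x : Fin 13 | 4 ≤ x.val} :=
  fun v => by simp only [Set.mem_setOf_eq]; omega

lemma myG_AB2 : ∀ v : Fin 13, v ∈ {x : Fin 13 | x.val ≤ 8} ∨ v ∈ {x : Fin 13 | 8 ≤ x.val} :=
  fun v => by simp only [Set.mem_setOf_eq]; omega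

/-- Generic two-step splitting for our concrete graph. -/
lemma myG_localize {W : Type*} {H : SimpleGraph W} [Nonempty W]
    (hW2 : ∀ w0 : W, ∃ w, w ≠ w0)
    (hconnH : ∀ w1 w2 : W, Relation.ReflTransGen H.Adj w1 w2)
    (h2conn : ∀ w0 w1 w2 : W, w1 ≠ w0 → w2 ≠ w0 →
      Relation.ReflTransGen (fun a b => H.Adj a b ∧ a ≠ w0 ∧ b ≠ w0) w1 w2)
    {f : Fin 13 → Option W} (hf : IsMinorMap myG H f) :
    (∃ f' : Fin 13 → Option W, IsMinorMap myG H f' ∧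
      ∀ v, f' v ≠ none → v ∈ Finset.univ.filter (fun x : Fin 13 => x.val ≤ 4)) ∨
    (∃ f' : Fin 13 → Option W, IsMinorMap myG H f' ∧
      ∀ v, f' v ≠ none → v ∈ Finset.univ.filter (fun x : Fin 13 => 4 ≤ x.val ∧ x.val ≤ 8)) ∨
    (∃ f' : Fin 13 → Option W, IsMinorMap myG H f' ∧
      ∀ v, f' v ≠ none → v ∈ Finset.univ.filter (fun x : Fin 13 => 8 ≤ x.val)) := by
  have h1 := minor_split (G := myG) (H := H) (S := Set.univ)
    (A := {x : Fin 13 | x.val ≤ 4}) (B := {x : Fin 13 | 4 ≤ x.val}) (c := 4)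
    (by decide : (4 : Fin 13).val ≤ 4) (by decide : 4 ≤ (4 : Fin 13).val)
    myG_AB1 myG_sep1 hW2 hconnH h2conn hf (fun v _ => trivial)
  rcases h1 with ⟨f1, hf1, hs1⟩ | ⟨f1, hf1, hs1⟩
  · refine Or.inl ⟨f1, hf1, fun v hv => ?_⟩
    exact Finset.mem_filter.mpr ⟨Finset.mem_univ _, (hs1 v hv).2⟩
  · have h2 := minor_split (G := myG) (H := H) (S := Set.univ ∩ {x : Fin 13 | 4 ≤ x.val})
      (A := {x : Fin 13 | x.val ≤ 8}) (B := {x : Fin 13 | 8 ≤ x.val}) (c := 8)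
      (by decide : (8 : Fin 13).val ≤ 8) (by decide : 8 ≤ (8 : Fin 13).val)
      myG_AB2 myG_sep2 hW2 hconnH h2conn hf1 hs1
    rcases h2 with ⟨f2, hf2, hs2⟩ | ⟨f2, hf2, hs2⟩
    · refine Or.inr (Or.inl ⟨f2, hf2, fun v hv => ?_⟩)
      obtain ⟨⟨-, h4⟩, h8⟩ := hs2 v hv
      exact Finset.mem_filter.mpr ⟨Finset.mem_univ _, h4, h8⟩
    · refine Or.inr (Or.inr ⟨f2, hf2, fun v hv => ?_⟩)
      exact Finset.mem_filter.mpr ⟨Finset.mem_univ _, (hs2 v hv).2⟩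

end Planar

lemma myG_no_K5 : ¬ HasMinor myG (completeGraph (Fin 5)) := by
  rintro ⟨f, h1, h2, h3⟩
  rcases myG_localize K5_hW2 K5_conn K5_2conn ⟨h1, h2, h3⟩ with
    ⟨f', hf', hs⟩ | ⟨f', hf', hs⟩ | ⟨f', hf', hs⟩
  · exact no_K5_of_small _ (by decide) (x := 0) (y := 1)
      (by decide) (by decide) (by decide) (by decide) hf' hs
  · exact no_K5_of_small _ (by decide) (x := 5) (y := 6)
      (by decide) (by decide) (by decide) (by decide) hf' hs
  · exact no_K5_of_small _ (by decide) (x := 9) (y := 10)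
      (by decide) (by decide) (by decide) (by decide) hf' hs

lemma myG_no_K33 : ¬ HasMinor myG (completeBipartiteGraph (Fin 3) (Fin 3)) := by
  rintro ⟨f, h1, h2, h3⟩
  rcases myG_localize K33_hW2 K33_conn K33_2conn ⟨h1, h2, h3⟩ with
    ⟨f', hf', hs⟩ | ⟨f', hf', hs⟩ | ⟨f', hf', hs⟩
  · exact no_K33_of_small _ (by decide) hf' hs
  · exact no_K33_of_small _ (by decide) hf' hs
  · exact no_K33_of_small _ (by decide) hf' hs


end Aux

/-- There is a 13-vertex planar graph with no Theta graph on 6 vertices having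
27 edges; in particular `27 > 18·13/7 - 48/7`, so the bound
`ex_P(n, Θ₆) ≤ 18n/7 - 48/7` fails at `n = 13`. -/
theorem theta6_counterexample_thirteen :
    (∃ G : SimpleGraph (Fin 13), IsPlanar G ∧ ¬ HasTheta6 G ∧
      G.edgeSet.ncard = 27) ∧
    (27 : ℚ) > 18 / 7 * 13 - 48 / 7 := by
  refine ⟨⟨myG, ⟨myG_no_K5, myG_no_K33⟩, myG_no_theta, myG_edges⟩, by norm_num⟩
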